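/- Let p be an odd prime and let n be an integer with 1 ≤ n ≤ 2p − 2. Then for every integer m' ≥ 0 there exist an integer d ≥ 1 and distinct positive integers s_1, …, s_d such that N(m', n) ≤ N(p^{s_1} + p^{s_2} + ⋯ + p^{s_d}, n). Consequently, if the maximum of N(m,n) over all m ∈ ℕ is attained, it is attained at some m of the form m = Σ_{i=1}^d p^{s_i} with distinct positive exponents s_i. -/

import Mathlib

open Finset

lemma sum_lt_pow {p : ℕ} (hp : 2 ≤ p) (r : ℕ) (c : ℕ → ℕ) (hc : ∀ t, t < r → c t < p) :
    ∑ t ∈ Finset.range r, c t * p ^ t < p ^ r := by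
  induction r with
  | zero => simp
  | succ r ih =>
    rw [Finset.sum_range_succ, pow_succ]
    have h1 : ∑ t ∈ Finset.range r, c t * p ^ t < p ^ r :=
      ih (fun t ht => hc t (ht.trans (Nat.lt_succ_self r)))
    have h2 : c r * p ^ r ≤ (p - 1) * p ^ r :=
      Nat.mul_le_mul_right _ (by have := hc r (Nat.lt_succ_self r); omega)
    have h3 : p ^ r + (p - 1) * p ^ r = p ^ r * p := by
      have : 1 + (p - 1) = p := by omega
      calc p ^ r + (p - 1) * p ^ r = (1 + (p - 1)) * p ^ r := by ring
        _ = p ^ r * p := by rw [this]; ring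
    omega

lemma sum_digits {p : ℕ} (hp : 2 ≤ p) : ∀ r m, m < p ^ r →
    ∑ i ∈ Finset.range r, (m / p ^ i % p) * p ^ i = m := by
  intro r
  induction r with
  | zero => intro m hm; simp at hm; simp [hm]
  | succ r ih =>
    intro m hm
    rw [Finset.sum_range_succ']
    have key : ∀ i : ℕ, m / p ^ (i + 1) = (m / p) / p ^ i := by
      intro i
      rw [Nat.div_div_eq_div_mul, ← pow_succ']
    have h2 : ∑ i ∈ Finset.range r, (m / p ^ (i + 1) % p) * p ^ (i + 1)
        = (∑ i ∈ Finset.range r, ((m / p) / p ^ i % p) * p ^ i) * p := by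
      rw [Finset.sum_mul]
      refine Finset.sum_congr rfl (fun i _ => ?_)
      rw [key i, pow_succ]; ring
    have h3 : m / p < p ^ r := by
      rw [Nat.div_lt_iff_lt_mul (by omega)]
      calc m < p ^ (r + 1) := hm
        _ = p ^ r * p := pow_succ p r
    rw [h2, ih (m / p) h3]
    simp [Nat.div_add_mod, Nat.mul_comm]

lemma digit_eq {p : ℕ} (hp : 2 ≤ p) (r : ℕ) (c : ℕ → ℕ) (hc : ∀ t, t < r → c t < p) (i : ℕ) :
    (∑ t ∈ Finset.range r, c t * p ^ t) / p ^ i % p = if i < r then c i else 0 := by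
  split
  case isFalse h =>
    have : (∑ t ∈ Finset.range r, c t * p ^ t) < p ^ i :=
      lt_of_lt_of_le (sum_lt_pow hp r c hc) (Nat.pow_le_pow_right (by omega) (by omega))
    rw [Nat.div_eq_of_lt this]
    simp
  case isTrue h =>
    have hsplit : ∑ t ∈ Finset.range r, c t * p ^ t
        = (∑ t ∈ Finset.range i, c t * p ^ t) + p ^ i * ∑ t ∈ Finset.range (r - i), c (i + t) * p ^ t := by
      have h1 : ∑ t ∈ Finset.range r, c t * p ^ t
          = (∑ t ∈ Finset.range i, c t * p ^ t) + ∑ t ∈ Finset.Ico i r, c t * p ^ t := by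
        rw [Finset.range_eq_Ico, ← Finset.sum_Ico_consecutive _ (Nat.zero_le i) h.le, Finset.range_eq_Ico]
      rw [h1, Finset.sum_Ico_eq_sum_range]
      congr 1
      rw [Finset.mul_sum]
      refine Finset.sum_congr rfl (fun t _ => ?_)
      rw [pow_add]; ring
    have hA : (∑ t ∈ Finset.range i, c t * p ^ t) < p ^ i :=
      sum_lt_pow hp i c (fun t ht => hc t (ht.trans h))
    have hdiv : (∑ t ∈ Finset.range r, c t * p ^ t) / p ^ i
        = ∑ t ∈ Finset.range (r - i), c (i + t) * p ^ t := by
      rw [hsplit, Nat.add_mul_div_left _ _ (pow_pos (by omega : 0 < p) i),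
        Nat.div_eq_of_lt hA, Nat.zero_add]
    rw [hdiv]
    obtain ⟨u, hu⟩ : ∃ u, r - i = u + 1 := ⟨r - i - 1, by omega⟩
    rw [hu, Finset.sum_range_succ']
    simp only [pow_zero, mul_one, Nat.add_zero]
    have : ∑ t ∈ Finset.range u, c (i + (t + 1)) * p ^ (t + 1)
        = p * ∑ t ∈ Finset.range u, c (i + (t + 1)) * p ^ t := by
      rw [Finset.mul_sum]
      refine Finset.sum_congr rfl (fun t _ => ?_)
      rw [pow_succ]; ring
    rw [this, Nat.mul_add_mod, Nat.mod_eq_of_lt (hc i h)]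

/-- The set `S_r(m,n)` of solutions of the linear system, encoded as pairs of
finitely supported sequences `(a, b) : (ℕ → ℕ) × (ℕ → ℕ)` where index `i`
(for `0 ≤ i < r`) corresponds to `a_{i+1}`, `b_{i+1}`. -/
def SolSet (p r m n : ℕ) : Set ((ℕ → ℕ) × (ℕ → ℕ)) :=
  {ab | (∀ i, r ≤ i → ab.1 i = 0) ∧ (∀ i, r ≤ i → ab.2 i = 0) ∧
        (∀ i, ab.2 i ≤ 1) ∧
        2 * (∑ i ∈ Finset.range r, ab.1 i) + ∑ i ∈ Finset.range r, ab.2 i = n ∧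
        ab.2 0 + ∑ i ∈ Finset.range r, (ab.1 i + ab.2 (i + 1)) * p ^ (i + 1) = m}

/-- `N_r(m,n)`, the number of solutions of the linear system. -/
noncomputable def Ncard (p r m n : ℕ) : ℕ := Nat.card (SolSet p r m n)


lemma mem_digits {p r m n : ℕ} (hp : 2 ≤ p) (hn : n + 2 ≤ 2 * p)
    {ab : (ℕ → ℕ) × (ℕ → ℕ)} (hab : ab ∈ SolSet p r m n) :
    m % p = ab.2 0 ∧ ∀ i, i < r → m / p ^ (i + 1) % p = ab.1 i + ab.2 (i + 1) := by
  obtain ⟨ha0, hb0, hb1, hsum, hmrep⟩ := hab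
  set c : ℕ → ℕ := fun t => if t = 0 then ab.2 0 else ab.1 (t - 1) + ab.2 t with hc
  have hrepr : m = ∑ t ∈ Finset.range (r + 1), c t * p ^ t := by
    rw [Finset.sum_range_succ']
    simp only [hc, Nat.add_sub_cancel, if_neg (Nat.succ_ne_zero _), if_pos rfl, pow_zero,
      mul_one]
    omega
  have hclt : ∀ t, t < r + 1 → c t < p := by
    intro t ht
    rcases t with _ | t
    · simp only [hc, if_pos rfl]
      have := hb1 0; omega
    · simp only [hc, if_neg (Nat.succ_ne_zero _), Nat.add_sub_cancel]
      have h1 : ab.1 t ≤ ∑ i ∈ Finset.range r, ab.1 i :=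
        Finset.single_le_sum (fun i _ => Nat.zero_le _) (Finset.mem_range.mpr (by omega))
      have h2 : ab.2 (t + 1) ≤ 1 := hb1 _
      by_cases h3 : t + 1 < r
      · have h4 : ab.2 (t + 1) ≤ ∑ i ∈ Finset.range r, ab.2 i :=
          Finset.single_le_sum (fun i _ => Nat.zero_le _) (Finset.mem_range.mpr h3)
        omega
      · have h4 : ab.2 (t + 1) = 0 := hb0 _ (by omega)
        omega
  have key : ∀ i, m / p ^ i % p = if i < r + 1 then c i else 0 := by
    intro i
    conv_lhs => rw [hrepr]
    exact digit_eq hp (r + 1) c hclt i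
  constructor
  · have := key 0
    simpa [hc] using this
  · intro i hi
    have := key (i + 1)
    rw [if_pos (by omega)] at this
    simpa [hc] using this

def Dd (p r m : ℕ) : Finset ℕ := (Finset.range r).filter (fun i => m / p ^ (i + 1) % p ≠ 0)
def Sd (p r m : ℕ) : ℕ := ∑ i ∈ Finset.range r, m / p ^ (i + 1) % p
def filt (p r m n : ℕ) : Finset (Finset ℕ) :=
  (Dd p r m).powerset.filter (fun B => B.card + n = 2 * Sd p r m + m % p)

lemma card_Dd_le_Sd (p r m : ℕ) : (Dd p r m).card ≤ Sd p r m := by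
  calc (Dd p r m).card = ∑ _i ∈ Dd p r m, 1 := (Finset.card_eq_sum_ones _)
    _ ≤ ∑ i ∈ Dd p r m, m / p ^ (i + 1) % p := by
        refine Finset.sum_le_sum (fun i hi => ?_)
        simp only [Dd, Finset.mem_filter] at hi
        omega
    _ ≤ Sd p r m := Finset.sum_le_sum_of_subset (Finset.filter_subset _ _)

def toB (r : ℕ) (ab : (ℕ → ℕ) × (ℕ → ℕ)) : Finset ℕ :=
  (Finset.range r).filter (fun i => ab.2 (i + 1) = 1)

lemma toB_mem {p r m n : ℕ} (hp : 2 ≤ p) (hr : 1 ≤ r) (hn : n + 2 ≤ 2 * p)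
    {ab : (ℕ → ℕ) × (ℕ → ℕ)} (hab : ab ∈ SolSet p r m n) : toB r ab ∈ filt p r m n := by
  obtain ⟨hd0, hd⟩ := mem_digits hp hn hab
  obtain ⟨ha0, hb0, hb1, hsum, hmrep⟩ := hab
  refine Finset.mem_filter.mpr ⟨Finset.mem_powerset.mpr ?_, ?_⟩
  · intro i hi
    simp only [toB, Finset.mem_filter, Finset.mem_range] at hi
    simp only [Dd, Finset.mem_filter, Finset.mem_range]
    refine ⟨hi.1, ?_⟩
    rw [hd i hi.1]
    omega
  · have hcard : (toB r ab).card = ∑ i ∈ Finset.range r, ab.2 (i + 1) := by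
      rw [toB, Finset.card_filter]
      refine Finset.sum_congr rfl (fun i _ => ?_)
      have := hb1 (i + 1)
      split <;> omega
    have hS : Sd p r m = (∑ i ∈ Finset.range r, ab.1 i) + ∑ i ∈ Finset.range r, ab.2 (i + 1) := by
      rw [Sd, ← Finset.sum_add_distrib]
      exact Finset.sum_congr rfl (fun i hi => hd i (Finset.mem_range.mp hi))
    have hb' : (∑ i ∈ Finset.range r, ab.2 (i + 1)) + ab.2 0 = ∑ i ∈ Finset.range r, ab.2 i := by
      obtain ⟨r', rfl⟩ : ∃ r', r = r' + 1 := ⟨r - 1, by omega⟩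
      rw [Finset.sum_range_succ (fun i => ab.2 (i + 1)), hb0 (r' + 1) (le_refl _),
        Finset.sum_range_succ' (fun i => ab.2 i)]
      omega
    omega

lemma toB_injOn {p r m n : ℕ} (hp : 2 ≤ p) (hn : n + 2 ≤ 2 * p)
    {ab1 ab2 : (ℕ → ℕ) × (ℕ → ℕ)} (h1 : ab1 ∈ SolSet p r m n) (h2 : ab2 ∈ SolSet p r m n)
    (heq : toB r ab1 = toB r ab2) : ab1 = ab2 := by
  obtain ⟨hd01, hd1⟩ := mem_digits hp hn h1
  obtain ⟨hd02, hd2⟩ := mem_digits hp hn h2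
  obtain ⟨h1a0, h1b0, h1b1, -, -⟩ := h1
  obtain ⟨h2a0, h2b0, h2b1, -, -⟩ := h2
  have hb : ab1.2 = ab2.2 := by
    funext j
    rcases j with _ | i
    · omega
    · by_cases hi : i < r
      · have hext := Finset.ext_iff.mp heq i
        simp only [toB, Finset.mem_filter, Finset.mem_range] at hext
        have e1 := h1b1 (i + 1)
        have e2 := h2b1 (i + 1)
        omega
      · rw [h1b0 (i + 1) (by omega), h2b0 (i + 1) (by omega)]
  have ha : ab1.1 = ab2.1 := by
    funext i
    by_cases hi : i < r
    · have e1 := hd1 i hi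
      have e2 := hd2 i hi
      rw [hb] at e1
      omega
    · rw [h1a0 i (by omega), h2a0 i (by omega)]
  exact Prod.ext ha hb

lemma solset_finite {p r m n : ℕ} (hp : 2 ≤ p) (hr : 1 ≤ r) (hn : n + 2 ≤ 2 * p) :
    Finite (SolSet p r m n) := by
  apply Finite.of_injective
    (fun x : SolSet p r m n => (⟨toB r x.1, toB_mem hp hr hn x.2⟩ : {B // B ∈ filt p r m n}))
  intro x y hxy
  exact Subtype.ext (toB_injOn hp hn x.2 y.2 (congrArg Subtype.val hxy))

lemma upper_bound {p r m n : ℕ} (hp : 2 ≤ p) (hr : 1 ≤ r) (hn : n + 2 ≤ 2 * p) :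
    Ncard p r m n ≤ (filt p r m n).card := by
  rw [Ncard, ← Nat.card_eq_finsetCard]
  exact Nat.card_le_card_of_injective
    (fun x : SolSet p r m n => (⟨toB r x.1, toB_mem hp hr hn x.2⟩ : {B // B ∈ filt p r m n}))
    (fun x y hxy => Subtype.ext (toB_injOn hp hn x.2 y.2 (congrArg Subtype.val hxy)))

def fromB (p r m : ℕ) (B : Finset ℕ) : (ℕ → ℕ) × (ℕ → ℕ) :=
  (fun i => if i < r then m / p ^ (i + 1) % p - (if i ∈ B then 1 else 0) else 0,
   fun j => if j = 0 then m % p else if j - 1 ∈ B then 1 else 0)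

lemma fromB_mem {p r m n : ℕ} (hp : 2 ≤ p) (hr : 1 ≤ r) (hm : m < p ^ r) (hc0 : m % p ≤ 1)
    {B : Finset ℕ} (hB : B ∈ filt p r m n) : fromB p r m B ∈ SolSet p r m n := by
  rw [filt, Finset.mem_filter, Finset.mem_powerset] at hB
  obtain ⟨hBD, hBeq⟩ := hB
  have hmem : ∀ i ∈ B, i < r ∧ m / p ^ (i + 1) % p ≠ 0 := by
    intro i hi
    have := hBD hi
    simpa [Dd, Finset.mem_filter, Finset.mem_range] using this
  have hdgr : ∀ j, r ≤ j → m / p ^ j % p = 0 := by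
    intro j hj
    have : m / p ^ j = 0 :=
      Nat.div_eq_of_lt (lt_of_lt_of_le hm (Nat.pow_le_pow_right (by omega) hj))
    simp [this]
  have hnotB : ∀ i, r ≤ i + 1 → i ∉ B := by
    intro i hi hiB
    exact (hmem i hiB).2 (hdgr (i + 1) hi)
  have hae : ∀ i ∈ Finset.range r,
      (fromB p r m B).1 i + (if i ∈ B then 1 else 0) = m / p ^ (i + 1) % p := by
    intro i hi
    rw [Finset.mem_range] at hi
    simp only [fromB, if_pos hi]
    by_cases hiB : i ∈ B
    · have := (hmem i hiB).2
      simp only [if_pos hiB]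
      omega
    · simp only [if_neg hiB]
      omega
  have hbe : ∀ i : ℕ, (fromB p r m B).2 (i + 1) = (if i ∈ B then 1 else 0) := by
    intro i
    simp only [fromB, if_neg (Nat.succ_ne_zero i), Nat.add_sub_cancel]
  have hb0' : (fromB p r m B).2 0 = m % p := by simp [fromB]
  have hfB : (Finset.range r).filter (· ∈ B) = B := by
    ext x
    simp only [Finset.mem_filter, Finset.mem_range]
    exact ⟨fun h => h.2, fun h => ⟨(hmem x h).1, h⟩⟩
  have hsum2 : (∑ i ∈ Finset.range r, (if i ∈ B then 1 else 0)) = B.card := by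
    conv_rhs => rw [← hfB]
    rw [Finset.card_filter]
  refine ⟨?_, ?_, ?_, ?_, ?_⟩
  · intro i hi
    simp only [fromB, if_neg (by omega : ¬ i < r)]
  · intro j hj
    have hj0 : j ≠ 0 := by omega
    simp only [fromB, if_neg hj0]
    rw [if_neg]
    exact fun h => hnotB (j - 1) (by omega) h
  · intro j
    simp only [fromB]
    split
    · omega
    · split <;> omega
  · -- the n-equation
    obtain ⟨r', rfl⟩ : ∃ r', r = r' + 1 := ⟨r - 1, by omega⟩
    have hsum1 : (∑ i ∈ Finset.range (r' + 1), (fromB p (r' + 1) m B).1 i)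
        + (∑ i ∈ Finset.range (r' + 1), (if i ∈ B then 1 else 0)) = Sd p (r' + 1) m := by
      rw [← Finset.sum_add_distrib]
      exact Finset.sum_congr rfl hae
    have hsb : (∑ i ∈ Finset.range (r' + 1), (fromB p (r' + 1) m B).2 i)
        = (∑ i ∈ Finset.range r', (if i ∈ B then 1 else 0)) + m % p := by
      rw [Finset.sum_range_succ' (fun i => (fromB p (r' + 1) m B).2 i), hb0']
      congr 1
    have hE : (∑ i ∈ Finset.range (r' + 1), (if i ∈ B then 1 else 0))
        = (∑ i ∈ Finset.range r', (if i ∈ B then 1 else 0)) + (if r' ∈ B then 1 else 0) :=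
      Finset.sum_range_succ _ r'
    have her' : (if r' ∈ B then 1 else 0) = 0 := by
      rw [if_neg (hnotB r' (le_refl _))]
    omega
  · -- the m-equation
    have hpt : ∀ i ∈ Finset.range r,
        ((fromB p r m B).1 i + (fromB p r m B).2 (i + 1)) * p ^ (i + 1)
          = (m / p ^ (i + 1) % p) * p ^ (i + 1) := by
      intro i hi
      rw [hbe i, hae i hi]
    rw [Finset.sum_congr rfl hpt, hb0']
    have hsd := sum_digits hp (r + 1) m
      (lt_of_lt_of_le hm (Nat.pow_le_pow_right (by omega) (Nat.le_succ r)))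
    rw [Finset.sum_range_succ'] at hsd
    simp only [pow_zero, Nat.div_one, mul_one] at hsd
    omega

lemma fromB_inj {p r m n : ℕ} {B1 B2 : Finset ℕ}
    (h1 : B1 ∈ filt p r m n) (h2 : B2 ∈ filt p r m n)
    (heq : fromB p r m B1 = fromB p r m B2) : B1 = B2 := by
  have hkey : ∀ i : ℕ, (if i ∈ B1 then (1:ℕ) else 0) = (if i ∈ B2 then 1 else 0) := by
    intro i
    have := congrFun (congrArg Prod.snd heq) (i + 1)
    simpa only [fromB, if_neg (Nat.succ_ne_zero i), Nat.add_sub_cancel] using this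
  ext x
  have := hkey x
  by_cases h1x : x ∈ B1 <;> by_cases h2x : x ∈ B2 <;> simp_all

lemma lower_bound {p r m n : ℕ} (hp : 2 ≤ p) (hr : 1 ≤ r) (hm : m < p ^ r)
    (hn : n + 2 ≤ 2 * p) (hc0 : m % p ≤ 1) :
    (filt p r m n).card ≤ Ncard p r m n := by
  have : Finite (SolSet p r m n) := solset_finite hp hr hn
  rw [Ncard, ← Nat.card_eq_finsetCard]
  exact Nat.card_le_card_of_injective
    (fun x : {B // B ∈ filt p r m n} =>
      (⟨fromB p r m x.1, fromB_mem hp hr hm hc0 x.2⟩ : SolSet p r m n))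
    (fun x y hxy => Subtype.ext (fromB_inj x.2 y.2 (congrArg Subtype.val hxy)))


lemma filt_subset_powersetCard (p r m n : ℕ) :
    filt p r m n ⊆ Finset.powersetCard (2 * Sd p r m + m % p - n) (Dd p r m) := by
  intro B hB
  rw [filt, Finset.mem_filter, Finset.mem_powerset] at hB
  rw [Finset.mem_powersetCard]
  exact ⟨hB.1, by omega⟩

lemma filt_card_eq {p r m n : ℕ} (h : n ≤ 2 * Sd p r m + m % p) :
    (filt p r m n).card = (Dd p r m).card.choose (2 * Sd p r m + m % p - n) := by
  have heq : filt p r m n = Finset.powersetCard (2 * Sd p r m + m % p - n) (Dd p r m) := by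
    ext B
    rw [filt, Finset.mem_filter, Finset.mem_powerset, Finset.mem_powersetCard]
    exact ⟨fun ⟨h1, h2⟩ => ⟨h1, by omega⟩, fun ⟨h1, h2⟩ => ⟨h1, by omega⟩⟩
  rw [heq, Finset.card_powersetCard]

/-- The stable value `N(m,n)` (for `p ≥ 2` one has `p ^ (m+1) > m`, so `r = m + 1`
is in the stable range), with the convention that it vanishes for negative arguments. -/
noncomputable def Nstab (p : ℕ) (m n : ℤ) : ℕ :=
  if 0 ≤ m ∧ 0 ≤ n then Ncard p (m.toNat + 1) m.toNat n.toNat else 0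

/-- for an odd prime `p` and `1 ≤ n ≤ 2p - 2`, every value `N(m',n)` is
dominated by `N(m,n)` for some `m = Σ_{i=1}^d p^{s_i}` with `d ≥ 1` and distinct positive
exponents `s_i`; consequently, if the maximum of `N(·,n)` is attained, it is attained at
a number of this form. -/
theorem stmt9 (p : ℕ) (hp : p.Prime) (hodd : Odd p) (n : ℕ) (hn1 : 1 ≤ n)
    (hn2 : n ≤ 2 * p - 2) :
    (∀ m' : ℕ, ∃ d : ℕ, 1 ≤ d ∧ ∃ s : Fin d → ℕ, (∀ i, 1 ≤ s i) ∧ Function.Injective s ∧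
        Nstab p (m' : ℤ) (n : ℤ) ≤ Nstab p (∑ i, (p : ℤ) ^ (s i)) (n : ℤ)) ∧
    (∀ m₀ : ℕ, (∀ m : ℕ, Nstab p (m : ℤ) (n : ℤ) ≤ Nstab p (m₀ : ℤ) (n : ℤ)) →
      ∃ d : ℕ, 1 ≤ d ∧ ∃ s : Fin d → ℕ, (∀ i, 1 ≤ s i) ∧ Function.Injective s ∧
        ∀ m : ℕ, Nstab p (m : ℤ) (n : ℤ) ≤ Nstab p (∑ i, (p : ℤ) ^ (s i)) (n : ℤ)) := by
  have hp2 : 2 ≤ p := hp.two_le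
  have hn2p : n + 2 ≤ 2 * p := by omega
  have nstab_eq : ∀ m : ℕ, Nstab p (m : ℤ) (n : ℤ) = Ncard p (m + 1) m n := by
    intro m
    rw [Nstab, if_pos ⟨Int.natCast_nonneg m, Int.natCast_nonneg n⟩]
    simp
  have hlt : ∀ m : ℕ, m < p ^ (m + 1) := fun m =>
    lt_of_lt_of_le (Nat.lt_pow_self (by omega : 1 < p) : m < p ^ m) (Nat.pow_le_pow_right (by omega) (Nat.le_succ m))
  have key : ∀ m' : ℕ, ∃ d : ℕ, 1 ≤ d ∧ ∃ s : Fin d → ℕ, (∀ i, 1 ≤ s i) ∧ Function.Injective s ∧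
      Nstab p (m' : ℤ) (n : ℤ) ≤ Nstab p (∑ i, (p : ℤ) ^ (s i)) (n : ℤ) := by
    intro m'
    by_cases hz : Ncard p (m' + 1) m' n = 0
    · refine ⟨1, le_refl 1, fun _ => 1, fun _ => le_refl 1,
        fun a b _ => Subsingleton.elim a b, ?_⟩
      rw [nstab_eq m', hz]
      exact Nat.zero_le _
    · have hub := upper_bound (p := p) (r := m' + 1) (m := m') (n := n) hp2 (by omega) hn2p
      have hfne : (filt p (m' + 1) m' n).Nonempty := by
        rw [← Finset.card_pos]
        omega
      obtain ⟨B, hB⟩ := hfne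
      rw [filt, Finset.mem_filter, Finset.mem_powerset] at hB
      obtain ⟨hBD, hBeq⟩ := hB
      have hTk : B.card ≤ (Dd p (m' + 1) m').card := Finset.card_le_card hBD
      have hkS : (Dd p (m' + 1) m').card ≤ Sd p (m' + 1) m' := card_Dd_le_Sd p (m' + 1) m'
      obtain ⟨j, d, hjT, hjdn, hd1, hjd2, hkd2⟩ :
          ∃ j d : ℕ, j + B.card = (Dd p (m' + 1) m').card ∧ d + j = n ∧ 1 ≤ d ∧ j ≤ d ∧
            (Dd p (m' + 1) m').card ≤ d := by
        refine ⟨(Dd p (m' + 1) m').card - B.card,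
          n - ((Dd p (m' + 1) m').card - B.card), by omega, by omega, by omega, by omega,
          by omega⟩
      set M := ∑ t ∈ Finset.range d, p ^ (t + 1) with hM
      refine ⟨d, hd1, fun i => (i : ℕ) + 1, fun i => Nat.le_add_left 1 i,
        fun a b hab => Fin.ext (Nat.succ_injective hab), ?_⟩
      have hsum_eq : (∑ i : Fin d, (p : ℤ) ^ ((i : ℕ) + 1)) = (M : ℤ) := by
        rw [Fin.sum_univ_eq_sum_range (fun i => (p : ℤ) ^ (i + 1)) d, hM]
        push_cast
        rfl
      rw [hsum_eq, nstab_eq m', nstab_eq M]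
      set cM : ℕ → ℕ := fun t => if t = 0 then 0 else if t < d + 1 then 1 else 0 with hcM
      have hMrepr : M = ∑ t ∈ Finset.range (d + 1), cM t * p ^ t := by
        rw [Finset.sum_range_succ']
        simp only [hcM, if_neg (Nat.succ_ne_zero _), if_pos rfl, pow_zero]
        rw [zero_mul, add_zero, hM]
        refine Finset.sum_congr rfl (fun t ht => ?_)
        rw [if_pos (by rw [Finset.mem_range] at ht; omega), one_mul]
      have hMdg : ∀ i, M / p ^ i % p = if i < d + 1 then cM i else 0 := by
        intro i
        conv_lhs => rw [hMrepr]
        refine digit_eq hp2 (d + 1) cM (fun t _ => ?_) i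
        simp only [hcM]
        split_ifs <;> omega
      have hM0 : M % p = 0 := by
        have h0 := hMdg 0
        simp only [pow_zero, Nat.div_one, if_pos (Nat.succ_pos d), hcM, if_pos rfl] at h0
        exact h0
      have hdg1 : ∀ i, M / p ^ (i + 1) % p = if i < d then 1 else 0 := by
        intro i
        rw [hMdg (i + 1)]
        simp only [hcM, if_neg (Nat.succ_ne_zero _)]
        split_ifs <;> omega
      have hdM : d ≤ M := by
        calc d = ∑ _t ∈ Finset.range d, 1 := by simp
          _ ≤ M := by
              rw [hM]
              exact Finset.sum_le_sum (fun t _ => Nat.one_le_pow _ _ (by omega))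
      have hDdM : Dd p (M + 1) M = Finset.range d := by
        ext i
        simp only [Dd, Finset.mem_filter, Finset.mem_range, hdg1 i]
        refine ⟨fun hc => ?_, fun hi => ⟨by omega, ?_⟩⟩
        · by_contra hlt'
          exact hc.2 (if_neg hlt')
        · rw [if_pos hi]
          exact one_ne_zero
      have hSdM : Sd p (M + 1) M = d := by
        rw [Sd]
        calc ∑ i ∈ Finset.range (M + 1), M / p ^ (i + 1) % p
            = ∑ i ∈ Finset.range (M + 1), (if i < d then 1 else 0) :=
              Finset.sum_congr rfl (fun i _ => hdg1 i)
          _ = ((Finset.range (M + 1)).filter (fun i => i < d)).card :=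
              (Finset.card_filter _ _).symm
          _ = (Finset.range d).card := by
              congr 1
              ext x
              simp only [Finset.mem_filter, Finset.mem_range]
              omega
          _ = d := Finset.card_range d
      have hstep1 : Ncard p (m' + 1) m' n ≤ (Dd p (m' + 1) m').card.choose B.card := by
        refine le_trans hub (le_trans
          (Finset.card_le_card (filt_subset_powersetCard p (m' + 1) m' n)) ?_)
        rw [Finset.card_powersetCard]
        have hTe : 2 * Sd p (m' + 1) m' + m' % p - n = B.card := by omega
        rw [hTe]
      have hstep2 : (Dd p (m' + 1) m').card.choose B.card
          = (Dd p (m' + 1) m').card.choose j := by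
        have hTe : B.card = (Dd p (m' + 1) m').card - j := by omega
        rw [hTe, Nat.choose_symm (by omega : j ≤ (Dd p (m' + 1) m').card)]
      have hstep3 : (Dd p (m' + 1) m').card.choose j ≤ d.choose j :=
        Nat.choose_le_choose j hkd2
      have hstep4 : d.choose j = (filt p (M + 1) M n).card := by
        rw [filt_card_eq (by rw [hSdM, hM0]; omega)]
        rw [hDdM, Finset.card_range, hSdM, hM0]
        have he : 2 * d + 0 - n = d - j := by omega
        rw [he]
        exact (Nat.choose_symm hjd2).symm
      have hstep5 : (filt p (M + 1) M n).card ≤ Ncard p (M + 1) M n :=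
        lower_bound hp2 (by omega) (hlt M) hn2p (by omega)
      omega
  refine ⟨key, fun m₀ hm₀ => ?_⟩
  obtain ⟨d, hd, s, hs1, hsinj, hle⟩ := key m₀
  exact ⟨d, hd, s, hs1, hsinj, fun m => le_trans (hm₀ m) hle⟩
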